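/- Let V = ℝ^d, A a Banach algebra with a smooth isometric action α of V, and J skew-symmetric. For a in the smooth subalgebra and z ∈ V with α_x(a) = e(−x·z)a for all x, the Rieffel product with a Schwartz function ξ ∈ S(V; A) given by (a ×_J ξ)(x) = ∫ α_{Jy−x}(a) ξ̂(y) e(x·y) dy satisfies (a ×_J ξ)(x) = e(x·z) a ξ(x + Jz); that is, on homogeneous elements the deformed action is translation by Jz composed with multiplication by a character and by a. -/

import Mathlib

open RealInnerProductSpace MeasureTheory

abbrev Vd (d : ℕ) := EuclideanSpace ℝ (Fin d)

/-- `e(x·y) = exp(2πi⟨x,y⟩)`. -/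
noncomputable def eBil {d : ℕ} (x y : Vd d) : ℂ :=
  Complex.exp (2 * Real.pi * Complex.I * ((⟪x, y⟫ : ℝ) : ℂ))

/-- The `A`-valued Fourier transform `ξ̂(y) = ∫ ξ(x) e(−x·y) dx`. -/
noncomputable def vFourier {d : ℕ} {A : Type*} [NormedAddCommGroup A] [NormedSpace ℂ A]
    (f : Vd d → A) (y : Vd d) : A :=
  ∫ z : Vd d, Complex.exp (-(2 * Real.pi * Complex.I) * ((⟪z, y⟫ : ℝ) : ℂ)) • f z

open FourierTransform

lemma eBil_norm {d : ℕ} (x y : Vd d) : ‖eBil x y‖ = 1 := by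
  rw [eBil, Complex.norm_exp]
  have : (2 * Real.pi * Complex.I * ((⟪x, y⟫ : ℝ) : ℂ)).re = 0 := by simp
  simp [this]

lemma vFourier_eq {d : ℕ} {A : Type*} [NormedAddCommGroup A] [NormedSpace ℂ A]
    (f : Vd d → A) : vFourier f = 𝓕 f := by
  ext y
  rw [vFourier, Real.fourier_eq']
  congr 1; ext v; congr 2; push_cast; ring

lemma key_inversion {d : ℕ} {A : Type*} [NormedAddCommGroup A] [NormedSpace ℂ A]
    [CompleteSpace A] (ξ : SchwartzMap (Vd d) A) (w : Vd d) :
    (∫ y : Vd d, eBil w y • (𝓕 (⇑ξ)) y) = ξ w := by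
  have h := Continuous.fourierInv_fourier_eq ξ.continuous ξ.integrable
    (by exact (SchwartzMap.fourierTransformCLM ℂ ξ).integrable)
  have h2 := congrFun h w
  rw [Real.fourierInv_eq'] at h2
  have h3 : ∀ y : Vd d, (⟪w, y⟫ : ℝ) = ⟪y, w⟫ := fun y => real_inner_comm y w
  simp_rw [eBil, h3]
  push_cast at h2
  simp_rw [mul_right_comm (2 * (Real.pi : ℂ)) Complex.I]
  exact h2

theorem stmt15 (d : ℕ) {A : Type*} [NormedRing A] [NormedAlgebra ℂ A] [CompleteSpace A]
    (α : Vd d → (A →ₐ[ℂ] A))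
    (hα0 : α 0 = AlgHom.id ℂ A)
    (hαadd : ∀ x y : Vd d, α (x + y) = (α x).comp (α y))
    (hiso : ∀ (x : Vd d) (a : A), ‖α x a‖ = ‖a‖)
    (hcont : ∀ a : A, Continuous fun x : Vd d => α x a)
    (J : Vd d →ₗ[ℝ] Vd d) (hJ : ∀ x y : Vd d, ⟪J x, y⟫ = -⟪x, J y⟫)
    (z : Vd d) (a : A)
    -- `a` homogeneous of weight `z`: `α_x(a) = e(−x·z) a`
    (ha : ∀ x : Vd d, α x a = eBil (-x) z • a) :
    -- `(a ×_J ξ)(x) = ∫ α_{Jy−x}(a) ξ̂(y) e(x·y) dy = e(x·z) a ξ(x+Jz)`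
    ∀ (ξ : SchwartzMap (Vd d) A) (x : Vd d),
      (∫ y : Vd d, eBil x y • (α (J y - x) a * vFourier (⇑ξ) y))
        = eBil x z • (a * ξ (x + J z)) := by
  intro ξ x
  have hvF : vFourier (⇑ξ) = 𝓕 (⇑ξ) := vFourier_eq _
  have hFi : Integrable (𝓕 (⇑ξ)) := by
    exact (SchwartzMap.fourierTransformCLM ℂ ξ).integrable
  have hFc : Continuous (𝓕 (⇑ξ)) := by
    have := (SchwartzMap.fourierTransformCLM ℂ ξ).continuous
    exact this
  have heBc : Continuous fun y : Vd d => eBil (x + J z) y := by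
    unfold eBil
    exact Complex.continuous_exp.comp
      (continuous_const.mul (Complex.continuous_ofReal.comp
        (continuous_const.inner continuous_id)))
  have hpt : ∀ y : Vd d, eBil x y • (α (J y - x) a * vFourier (⇑ξ) y)
      = eBil x z • (a * (eBil (x + J z) y • 𝓕 (⇑ξ) y)) := by
    intro y
    rw [hvF, ha, smul_mul_assoc, smul_smul, mul_smul_comm, smul_smul]
    congr 1
    have e1 : (⟪-(J y - x), z⟫ : ℝ) = ⟪y, J z⟫ + ⟪x, z⟫ := by
      have hy := hJ y z
      simp only [inner_neg_left, inner_sub_left, hy]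
      ring
    have e2 : (⟪x + J z, y⟫ : ℝ) = ⟪x, y⟫ + ⟪y, J z⟫ := by
      rw [inner_add_left, real_inner_comm (J z) y]
    rw [eBil, eBil, eBil, eBil, ← Complex.exp_add, ← Complex.exp_add]
    congr 1
    rw [e1, e2]
    push_cast
    ring
  simp_rw [hpt]
  rw [integral_smul]
  have hg : Integrable (fun y : Vd d => eBil (x + J z) y • 𝓕 (⇑ξ) y) := by
    refine hFi.norm.mono' (heBc.smul hFc).aestronglyMeasurable ?_
    filter_upwards with y
    rw [norm_smul, eBil_norm, one_mul]
  have hmul := ContinuousLinearMap.integral_comp_comm (ContinuousLinearMap.mul ℂ A a) hg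
  simp only [ContinuousLinearMap.mul_apply'] at hmul
  rw [hmul, key_inversion ξ (x + J z)]
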